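/- For all natural numbers n ≥ 1 and k ≥ 2: n^k · (0.76 · n)^(n·k) < n·k · (0.76 · n · k)^(n·k), i.e., the GBA-product complexity bound for Rabin complementation is strictly better than complementing a k·n-state Büchi automaton obtained by degeneralization. -/

import Mathlib

theorem rabin_bound_lt_degeneralization_bound (n k : ℕ) (hn : 1 ≤ n) (hk : 2 ≤ k) :
    (n : ℝ) ^ k * (0.76 * n) ^ (n * k) <
      (n : ℝ) * k * (0.76 * n * k) ^ (n * k) := by
  have hnat : n ^ k < n * k * k ^ (n * k) := by
    have h1 : n ^ k ≤ k ^ (n * k) := by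
      calc n ^ k ≤ (k ^ n) ^ k := by
            apply Nat.pow_le_pow_left
            calc n ≤ 2 ^ n := (Nat.lt_two_pow_self (n := n)).le
            _ ≤ k ^ n := Nat.pow_le_pow_left hk n
        _ = k ^ (n * k) := by rw [← pow_mul]
    have h2 : k ^ (n * k) < n * k * k ^ (n * k) := by
      have hpos : 0 < k ^ (n * k) := pow_pos (by omega) _
      have : 1 < n * k := by nlinarith
      calc k ^ (n * k) = 1 * k ^ (n * k) := (one_mul _).symm
        _ < n * k * k ^ (n * k) := by
            exact (Nat.mul_lt_mul_right hpos).mpr this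
    omega
  have hX : (0 : ℝ) < (0.76 * n) ^ (n * k) := by
    apply pow_pos
    have : (1 : ℝ) ≤ n := by exact_mod_cast hn
    nlinarith
  have hcast : ((n : ℝ)) ^ k < (n : ℝ) * k * (k : ℝ) ^ (n * k) := by
    exact_mod_cast hnat
  calc (n : ℝ) ^ k * (0.76 * n) ^ (n * k)
      < ((n : ℝ) * k * (k : ℝ) ^ (n * k)) * (0.76 * n) ^ (n * k) :=
        mul_lt_mul_of_pos_right hcast hX
    _ = (n : ℝ) * k * (0.76 * n * k) ^ (n * k) := by
        rw [mul_pow (0.76 * (n : ℝ)) (k : ℝ)]; ring
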